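/- For each k \geq 0 let \mu_{k+1}: \mathcal{I}^{\times(k+1)} \to \mathcal{I} denote the iterated concatenation functor (\mathbf{n_0},...,\mathbf{n_k}) \mapsto \mathbf{n_0} \sqcup ... \sqcup \mathbf{n_k}. For each morphism \alpha: [k] \to [l] in the simplex category, define a natural transformation \bar{\alpha}: \mu_{l+1} \Rightarrow \mu_{k+1} \circ \alpha^* by setting \bar{\alpha} = id if \alpha is a degeneracy or a face map other than the last, and \bar{\alpha} the block permutation \tau_{(\mathbf{n_0} \sqcup ... \sqcup \mathbf{n_{k-1}}, \mathbf{n_k})} if \alpha is the last face map \delta^k. Then these assignments are compatible with the simplicial identities, i.e., for composable face/degeneracy maps, the two ways of computing \bar{\cdot} on the two sides of each simplicial identity agree. -/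
import Mathlib


/-- Effect on objects of the face maps of the cyclic bar construction `B^cy_•𝓘` of the
monoidal category `(𝓘, ⊔, 𝟎)`, recorded on cardinalities:
`d_i(n_0,...,n_{k+1}) = (n_0, ..., n_i + n_{i+1}, ..., n_{k+1})` for `i < k+1` and
`d_{k+1}(n_0,...,n_{k+1}) = (n_{k+1} + n_0, n_1, ..., n_k)`. -/
def faceObj (k i : ℕ) (n : Fin (k + 2) → ℕ) : Fin (k + 1) → ℕ :=
  if i = k + 1 then
    fun j => if j.val = 0 then n (Fin.last (k + 1)) + n 0 else n j.castSucc
  else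
    fun j =>
      if j.val < i then n j.castSucc
      else if j.val = i then n j.castSucc + n j.succ
      else n j.succ

/-- Effect on objects of the degeneracy maps of `B^cy_•𝓘`:
`s_i(n_0,...,n_k) = (n_0,...,n_i, 0, n_{i+1},...,n_k)`. -/
def degenObj (k i : ℕ) (n : Fin (k + 1) → ℕ) : Fin (k + 2) → ℕ :=
  fun j =>
    if h : j.val ≤ i ∧ j.val ≤ k then n ⟨j.val, by omega⟩
    else if j.val = i + 1 then 0
    else n ⟨min (j.val - 1) k, by omega⟩

/-- The block permutation `τ_{(m,a)}` as a function (0-indexed):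
`x < m` is sent to `a + x` and `m + j` to `j`. -/
def tau (m a : ℕ) (x : ℕ) : ℕ := if x < m then a + x else x - m

/-- The total cardinality `n_0 + ⋯ + n_k` of a tuple of objects of `𝓘`. -/
def totsum {j : ℕ} (n : Fin j → ℕ) : ℕ := ∑ i, n i

/-- The component at the tuple `n` of the natural transformation
`ᾱ : μ_{l+1} ⟹ μ_{k+1} ∘ α^*` associated to a face map `α = δ_i` of the cyclic bar
construction: it is the identity for all faces except the last one, where it is the block
permutation `τ_{(n_0 ⊔ ⋯ ⊔ n_k, n_{k+1})}` of `n_0 + ⋯ + n_{k+1}` letters.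
(For degeneracy maps the corresponding component is the identity.) -/
def barFace (k i : ℕ) (n : Fin (k + 2) → ℕ) : ℕ → ℕ :=
  if i = k + 1 then tau (totsum n - n (Fin.last (k + 1))) (n (Fin.last (k + 1))) else id


section BarHelpers

lemma tau_comp_helper (S a b : ℕ) (hab : a + b ≤ S) (x : ℕ) (hx : x < S) :
    tau (S - b) b (tau (S - a) a x) = tau (S - (b + a)) (b + a) x := by
  unfold tau; split_ifs <;> omega

lemma two_le_totsum {j : ℕ} (n : Fin j → ℕ) (p q : Fin j) (h : p ≠ q) :
    n p + n q ≤ totsum n := by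
  rw [totsum, ← Finset.sum_pair h]
  exact Finset.sum_le_sum_of_subset (Finset.subset_univ _)

lemma single_le_totsum {j : ℕ} (n : Fin j → ℕ) (p : Fin j) : n p ≤ totsum n :=
  Finset.single_le_sum (fun i _ => Nat.zero_le (n i)) (Finset.mem_univ p)

lemma totsum_faceObj_merge (k i : ℕ) (hi : i ≤ k) (n : Fin (k+2) → ℕ) :
    totsum (faceObj k i n) = totsum n := by
  have hne : i ≠ k + 1 := by omega
  unfold totsum
  rw [Fin.sum_univ_succAbove n ⟨i+1, by omega⟩]
  have key : ∀ j : Fin (k+1), faceObj k i n j =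
      n ((⟨i+1, by omega⟩ : Fin (k+2)).succAbove j) +
        (if j = ⟨i, by omega⟩ then n ⟨i+1, by omega⟩ else 0) := by
    intro j
    simp only [faceObj, if_neg hne]
    rcases Nat.lt_trichotomy j.val i with h | h | h
    · have hlt : j.castSucc < (⟨i+1, by omega⟩ : Fin (k+2)) := by
        rw [Fin.lt_def]; simp only [Fin.coe_castSucc]; omega
      have hje : ¬ j = (⟨i, by omega⟩ : Fin (k+1)) := by
        rw [Fin.ext_iff]; simp only []; omega
      rw [if_pos h, Fin.succAbove_of_castSucc_lt _ _ hlt, if_neg hje, add_zero]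
    · have hlt : j.castSucc < (⟨i+1, by omega⟩ : Fin (k+2)) := by
        rw [Fin.lt_def]; simp only [Fin.coe_castSucc]; omega
      have hje : j = (⟨i, by omega⟩ : Fin (k+1)) := by
        rw [Fin.ext_iff]; simp only []; omega
      rw [if_neg (by omega), if_pos h, Fin.succAbove_of_castSucc_lt _ _ hlt, if_pos hje]
      congr 2
      rw [Fin.ext_iff]; simp only [Fin.val_succ]; omega
    · have hle : (⟨i+1, by omega⟩ : Fin (k+2)) ≤ j.castSucc := by
        rw [Fin.le_def]; simp only [Fin.coe_castSucc]; omega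
      have hje : ¬ j = (⟨i, by omega⟩ : Fin (k+1)) := by
        rw [Fin.ext_iff]; simp only []; omega
      rw [if_neg (by omega), if_neg (by omega), Fin.succAbove_of_le_castSucc _ _ hle,
        if_neg hje, add_zero]
  rw [Finset.sum_congr rfl (fun j _ => key j), Finset.sum_add_distrib]
  have hs : (∑ j : Fin (k+1), if j = (⟨i, by omega⟩ : Fin (k+1)) then n ⟨i+1, by omega⟩ else 0)
      = n ⟨i+1, by omega⟩ := by
    rw [Finset.sum_ite_eq' Finset.univ (⟨i, by omega⟩ : Fin (k+1))
      (fun _ => n ⟨i+1, by omega⟩), if_pos (Finset.mem_univ _)]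
  rw [hs]
  exact add_comm _ _
lemma totsum_faceObj_rot (k : ℕ) (n : Fin (k+2) → ℕ) :
    totsum (faceObj k (k+1) n) = totsum n := by
  unfold totsum
  rw [Fin.sum_univ_succ (faceObj k (k+1) n), Fin.sum_univ_castSucc n,
    Fin.sum_univ_succ (fun j : Fin (k+1) => n j.castSucc)]
  simp only [faceObj, if_pos rfl, Fin.val_succ, Fin.val_zero]
  simp [Fin.castSucc_zero]
  ring_nf
lemma totsum_degenObj (k i : ℕ) (hi : i ≤ k) (n : Fin (k+1) → ℕ) :
    totsum (degenObj k i n) = totsum n := by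
  unfold totsum
  rw [Fin.sum_univ_succAbove (degenObj k i n) ⟨i+1, by omega⟩]
  have h0 : degenObj k i n ⟨i+1, by omega⟩ = 0 := by
    simp only [degenObj]
    rw [dif_neg (by omega), if_pos trivial]
  rw [h0, zero_add]
  apply Finset.sum_congr rfl
  intro j _
  rcases Nat.lt_or_ge j.val (i+1) with h | h
  · have hlt : j.castSucc < (⟨i+1, by omega⟩ : Fin (k+2)) := by
      rw [Fin.lt_def]; simp only [Fin.coe_castSucc]; omega
    rw [Fin.succAbove_of_castSucc_lt _ _ hlt]
    simp only [degenObj, Fin.coe_castSucc]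
    rw [dif_pos ⟨by omega, by omega⟩]
  · have hle : (⟨i+1, by omega⟩ : Fin (k+2)) ≤ j.castSucc := by
      rw [Fin.le_def]; simp only [Fin.coe_castSucc]; omega
    rw [Fin.succAbove_of_le_castSucc _ _ hle]
    simp only [degenObj, Fin.val_succ]
    rw [dif_neg (by omega), if_neg (by omega)]
    congr 1
    apply Fin.ext
    simp only []
    omega
lemma faceObj_last_merge (k i : ℕ) (hik : i ≤ k) (n : Fin (k + 3) → ℕ) :
    faceObj (k+1) i n (Fin.last (k+1)) = n (Fin.last (k+2)) := by
  simp only [faceObj]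
  rw [if_neg (by omega)]
  simp only [Fin.val_last]
  rw [if_neg (by omega), if_neg (by omega)]
  congr 1

lemma faceObj_last_mergetop (k : ℕ) (n : Fin (k + 3) → ℕ) :
    faceObj (k+1) (k+1) n (Fin.last (k+1)) = n ⟨k+1, by omega⟩ + n (Fin.last (k+2)) := by
  simp only [faceObj]
  rw [if_neg (by omega)]
  simp only [Fin.val_last]
  rw [if_neg (by omega), if_pos trivial]
  congr 1

lemma faceObj_last_rot (k : ℕ) (n : Fin (k + 3) → ℕ) :
    faceObj (k+1) (k+2) n (Fin.last (k+1)) = n ⟨k+1, by omega⟩ := by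
  simp only [faceObj]
  rw [if_pos trivial]
  simp only [Fin.val_last]
  rw [if_neg (by omega)]
  congr 1

lemma degenObj_last (k j : ℕ) (hj : j ≤ k) (n : Fin (k+2) → ℕ) :
    degenObj (k+1) j n (Fin.last (k+2)) = n (Fin.last (k+1)) := by
  simp only [degenObj, Fin.val_last]
  rw [dif_neg (by omega), if_neg (by omega)]
  congr 1
  apply Fin.ext
  simp

lemma degenObj_last_top (k : ℕ) (n : Fin (k+1) → ℕ) :
    degenObj k k n (Fin.last (k+1)) = 0 := by
  simp only [degenObj, Fin.val_last]
  rw [dif_neg (by omega), if_pos trivial]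

end BarHelpers

section BarFaceHelpers

lemma barFace_id (k i : ℕ) (m : Fin (k+2) → ℕ) (h : i ≠ k+1) : barFace k i m = id := by
  rw [barFace, if_neg h]

lemma barFace_top (k i : ℕ) (m : Fin (k+2) → ℕ) (h : i = k+1) :
    barFace k i m = tau (totsum m - m (Fin.last (k+1))) (m (Fin.last (k+1))) := by
  rw [barFace, if_pos h]

end BarFaceHelpers

/-- the transformations `ᾱ` (identity on degeneracies and on all faces
except the last one, and the block permutation `τ_{(𝐧₀⊔⋯⊔𝐧_{k-1}, 𝐧_k)}` on the last
face map) are compatible with the simplicial identities: for each simplicial identity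
among face and degeneracy maps, the two composites of the transformations `ᾱ`
(formed according to the composition rule `\overline{βα} = (ᾱ β^*)(β̄)`) agree.
(All functions are compared on `{0, ..., n_0 + ⋯ + n_l - 1}`.) -/
theorem bar_transformations_compatible :
    -- compatibility with `d_i d_j = d_{j-1} d_i` for `i < j ≤ k+2`
    (∀ (k i j : ℕ), i < j → j ≤ k + 2 → ∀ (n : Fin (k + 3) → ℕ), ∀ x < totsum n,
        barFace k i (faceObj (k + 1) j n) (barFace (k + 1) j n x) =
          barFace k (j - 1) (faceObj (k + 1) i n) (barFace (k + 1) i n x)) ∧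
    -- compatibility with `d_i s_j = s_{j-1} d_i` for `i < j ≤ k+1`
    (∀ (k i j : ℕ), i < j → j ≤ k + 1 → ∀ (n : Fin (k + 2) → ℕ), ∀ x < totsum n,
        barFace (k + 1) i (degenObj (k + 1) j n) x = barFace k i n x) ∧
    -- compatibility with `d_i s_j = id` for `i ∈ {j, j+1}`, `j ≤ k`
    (∀ (k i j : ℕ), (i = j ∨ i = j + 1) → j ≤ k → ∀ (n : Fin (k + 1) → ℕ), ∀ x < totsum n,
        barFace k i (degenObj k j n) x = x) ∧
    -- compatibility with `d_i s_j = s_j d_{i-1}` for `j + 1 < i ≤ k+2`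
    (∀ (k i j : ℕ), j + 1 < i → i ≤ k + 2 → ∀ (n : Fin (k + 2) → ℕ), ∀ x < totsum n,
        barFace (k + 1) i (degenObj (k + 1) j n) x = barFace k (i - 1) n x) := by
  refine ⟨?_, ?_, ?_, ?_⟩
  · -- d_i d_j = d_{j-1} d_i
    intro k i j hij hjk n x hx
    rcases Nat.lt_or_ge j (k+2) with hj | hj
    · rw [barFace_id (k+1) j n (by omega), barFace_id (k+1) i n (by omega),
        barFace_id k i _ (by omega), barFace_id k (j-1) _ (by omega)]
    · have hj2 : j = k + 2 := by omega
      subst hj2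
      rcases Nat.lt_or_ge i (k+1) with hi | hi
      · rw [barFace_id k i _ (by omega), barFace_id (k+1) i n (by omega),
          barFace_top (k+1) (k+2) n rfl, barFace_top k (k+2-1) _ (by omega)]
        simp only [id_eq]
        rw [faceObj_last_merge k i (by omega) n,
          totsum_faceObj_merge (k+1) i (by omega) n]
      · have hi2 : i = k + 1 := by omega
        subst hi2
        rw [barFace_top (k+1) (k+2) n rfl, barFace_id (k+1) (k+1) n (by omega),
          barFace_top k (k+1) _ rfl, barFace_top k (k+2-1) _ (by omega)]
        simp only [id_eq]
        rw [faceObj_last_rot k n, totsum_faceObj_rot (k+1) n,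
          faceObj_last_mergetop k n, totsum_faceObj_merge (k+1) (k+1) (by omega) n]
        have hab : n (Fin.last (k+2)) + n ⟨k+1, by omega⟩ ≤ totsum n :=
          two_le_totsum n (Fin.last (k+2)) ⟨k+1, by omega⟩
            (by rw [Ne, Fin.ext_iff]; simp only [Fin.val_last]; omega)
        exact tau_comp_helper (totsum n) (n (Fin.last (k+2))) (n ⟨k+1, by omega⟩)
          hab x hx
  · -- d_i s_j = s_{j-1} d_i
    intro k i j hij hjk n x hx
    rw [barFace_id (k+1) i _ (by omega), barFace_id k i n (by omega)]
  · -- d_i s_j = id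
    intro k i j hij hjk n x hx
    rcases hij with h | h
    · rw [barFace_id k i _ (by omega)]; rfl
    · by_cases hk : i = k + 1
      · have hjk2 : j = k := by omega
        subst hjk2
        rw [barFace_top j i _ hk, degenObj_last_top j n,
          totsum_degenObj j j le_rfl n]
        simp only [tau]
        split_ifs <;> omega
      · rw [barFace_id k i _ hk]; rfl
  · -- d_i s_j = s_j d_{i-1}
    intro k i j h1 h2 n x hx
    by_cases hi : i = k + 2
    · subst hi
      rw [barFace_top (k+1) (k+2) _ rfl, barFace_top k (k+2-1) n (by omega),
        degenObj_last k j (by omega) n, totsum_degenObj (k+1) j (by omega) n]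
    · rw [barFace_id (k+1) i _ (by omega), barFace_id k (i-1) n (by omega)]
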